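/- With u the unitriangular matrix with rows (1, δ, ϖ), (0,1,1), (0,0,1), the intersection u⁻¹ Q⁰_H u ∩ Q̄_G is trivial: if h has rows (a,b,0),(0,1,0),(0,0,x) with a, x invertible, and u⁻¹ h u is lower triangular, then a = x = 1 and b = 0, i.e. h is the identity. -/
import Mathlib


/-- If `h = h(a,b,x)` with `a,x` invertible and `u⁻¹ h u` is lower triangular,
then `h` is the identity: `a = 1`, `x = 1`, `b = 0`. -/
theorem stmt6 (δ ϖ a b x : ℂ) (hδϖ : δ ≠ ϖ) (ha : a ≠ 0) (hx : x ≠ 0)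
    (hlow : ∀ i j : Fin 3, i < j →
      ((!![1, δ, ϖ; 0, 1, 1; 0, 0, 1] : Matrix (Fin 3) (Fin 3) ℂ)⁻¹ *
        !![a, b, 0; 0, 1, 0; 0, 0, x] * !![1, δ, ϖ; 0, 1, 1; 0, 0, 1]) i j = 0) :
    a = 1 ∧ x = 1 ∧ b = 0 := by
  have hinv : (!![1, δ, ϖ; 0, 1, 1; 0, 0, 1] : Matrix (Fin 3) (Fin 3) ℂ)⁻¹ =
      !![1, -δ, δ - ϖ; 0, 1, -1; 0, 0, 1] := by
    apply Matrix.inv_eq_right_inv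
    ext i j
    fin_cases i <;> fin_cases j <;>
      simp [Matrix.mul_apply, Fin.sum_univ_three, Matrix.vecHead, Matrix.vecTail] <;> ring
  have h01 := hlow 0 1 (by decide)
  have h02 := hlow 0 2 (by decide)
  have h12 := hlow 1 2 (by decide)
  rw [hinv] at h01 h02 h12
  simp [Matrix.mul_apply, Fin.sum_univ_three, Matrix.vecHead, Matrix.vecTail] at h01 h02 h12
  have hx1 : x = 1 := by linear_combination -h12
  subst hx1
  have ha1 : a = 1 := by
    have : (δ - ϖ) * (a - 1) = 0 := by linear_combination h01 - h02
    rcases mul_eq_zero.mp this with h | h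
    · exact absurd (by linear_combination h) hδϖ
    · linear_combination h
  subst ha1
  refine ⟨rfl, rfl, by linear_combination h01⟩
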